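/- Let A be an n × n {0,1}-matrix whose directed graph Gr(A) is transitive and not a cycle (i.e., some vertex has at least two outgoing edges). Then the one-sided subshift (X_A, σ_A) is topologically free: for all natural numbers i ≠ j, the closure of the set V^{i,j} = {x ∈ X_A : σ_A^i(x) = σ_A^j(x)} has empty interior. -/

import Mathlib

/-- The one-sided subshift of finite type of a `{0,1}`-matrix `A`. -/
def ShiftSpace (n : ℕ) (A : Fin n → Fin n → ℕ) : Set (ℕ → Fin n) :=
  {x | ∀ i, A (x i) (x (i + 1)) = 1}

/-- The one-sided shift map on `X_A`. -/
def shiftMap (n : ℕ) (A : Fin n → Fin n → ℕ) :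
    ShiftSpace n A → ShiftSpace n A :=
  fun x => ⟨fun i => x.1 (i + 1), fun i => x.2 (i + 1)⟩

/-- The directed graph of `A` is transitive. -/
def GraphTransitive (n : ℕ) (A : Fin n → Fin n → ℕ) : Prop :=
  ∀ i j : Fin n, ∃ w : List (Fin n), w.Chain' (fun a b => A a b = 1) ∧
    w.head? = some i ∧ w.getLast? = some j

/-- `Gr(A)` is not a cycle: some vertex has at least two outgoing edges. -/
def NotACycle (n : ℕ) (A : Fin n → Fin n → ℕ) : Prop :=
  ∃ i j k : Fin n, j ≠ k ∧ A i j = 1 ∧ A i k = 1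

section Aux

variable {n : ℕ} {A : Fin n → Fin n → ℕ}

/-- From transitivity, extract a finite path as a function. -/
lemma path_fun (htrans : GraphTransitive n A) (u v : Fin n) :
    ∃ (m : ℕ) (f : ℕ → Fin n), f 0 = u ∧ f m = v ∧ ∀ k < m, A (f k) (f (k + 1)) = 1 := by
  obtain ⟨w, hch, hh, hl⟩ := htrans u v
  have hne : w ≠ [] := by rintro rfl; simp at hh
  have hlen : 0 < w.length := List.length_pos_iff.2 hne
  refine ⟨w.length - 1, fun k => w.getD k u, ?_, ?_, ?_⟩
  · have := List.head?_eq_head hne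
    rw [this] at hh
    simp only [List.getD_eq_getElem?_getD]
    rw [List.getElem?_eq_getElem hlen]
    simpa [List.head_eq_getElem] using hh
  · have := List.getLast?_eq_getLast hne
    rw [this] at hl
    simp only [List.getD_eq_getElem?_getD]
    rw [List.getElem?_eq_getElem (by omega : w.length - 1 < w.length)]
    simpa [List.getLast_eq_getElem] using hl
  · intro k hk
    have h1 : k < w.length := by omega
    have h2 : k + 1 < w.length := by omega
    have := (List.isChain_iff_getElem.1 hch) k (by omega)
    simp only [List.getD_eq_getElem?_getD, List.getElem?_eq_getElem h1,
      List.getElem?_eq_getElem h2]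
    simpa [List.get_eq_getElem] using this

/-- Any neighborhood in the product contains a cylinder. -/
lemma cylinder_sub {W : Set (ℕ → Fin n)} {x : ℕ → Fin n} (hW : W ∈ nhds x) :
    ∃ N, ∀ y : ℕ → Fin n, (∀ k < N, y k = x k) → y ∈ W := by
  rw [nhds_pi, Filter.mem_pi] at hW
  obtain ⟨I, hIfin, s, hs, hsub⟩ := hW
  obtain ⟨b, hb⟩ := hIfin.bddAbove
  refine ⟨b + 1, fun y hy => hsub ?_⟩
  intro k hk
  have hkb : k ≤ b := hb hk
  rw [hy k (by omega)]
  exact mem_of_mem_nhds (hs k)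

/-- Gluing a finite admissible piece with an infinite admissible tail. -/
lemma glue_edges {z g : ℕ → Fin n} {t : ℕ}
    (hz : ∀ s, s + 1 ≤ t → A (z s) (z (s + 1)) = 1)
    (ht : z t = g 0) (hg : ∀ s, A (g s) (g (s + 1)) = 1) :
    ∀ s, A ((fun s => if s < t then z s else g (s - t)) s)
          ((fun s => if s < t then z s else g (s - t)) (s + 1)) = 1 := by
  intro s
  by_cases h1 : s + 1 < t
  · simp only [if_pos (by omega : s < t), if_pos h1]
    exact hz s (by omega)
  · by_cases h2 : s < t
    · -- s + 1 = t
      have hst : s + 1 = t := by omega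
      simp only [if_pos h2, if_neg (by omega : ¬ s + 1 < t)]
      have : s + 1 - t = 0 := by omega
      rw [this, ← ht, ← hst]
      exact hz s (by omega)
    · simp only [if_neg h2, if_neg (by omega : ¬ s + 1 < t)]
      have : s + 1 - t = (s - t) + 1 := by omega
      rw [this]
      exact hg (s - t)

/-- A cycle at a vertex gives an infinite admissible path. -/
lemma cyc_edges {h : ℕ → Fin n} {L : ℕ} (hL : 0 < L) (hcl : h L = h 0)
    (he : ∀ k < L, A (h k) (h (k + 1)) = 1) :
    ∀ s, A (h (s % L)) (h ((s + 1) % L)) = 1 := by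
  intro s
  have hr : s % L < L := Nat.mod_lt _ hL
  by_cases hend : s % L + 1 = L
  · have : (s + 1) % L = 0 := by
      have : (s + 1) % L = (s % L + 1) % L := by
        conv_lhs => rw [← Nat.mod_add_mod]
      rw [this, hend, Nat.mod_self]
    rw [this, ← hcl]
    have h2 := he _ hr
    rwa [hend] at h2
  · have : (s + 1) % L = s % L + 1 := by
      have h1 : (s + 1) % L = (s % L + 1) % L := by
        conv_lhs => rw [← Nat.mod_add_mod]
      rw [h1, Nat.mod_eq_of_lt (by omega)]
    rw [this]
    exact he _ hr

/-- Two sequences periodic (with period `p`) from index `i` on, agreeing up to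
`T ≥ i + p`, agree everywhere. -/
lemma per_unique {z z' : ℕ → Fin n} {i p T : ℕ} (hp : 0 < p)
    (hz : ∀ k, z (k + i) = z (k + (i + p)))
    (hz' : ∀ k, z' (k + i) = z' (k + (i + p)))
    (hT : i + p ≤ T) (hag : ∀ m ≤ T, z m = z' m) : ∀ m, z m = z' m := by
  intro m
  induction m using Nat.strong_induction_on with
  | _ m ih =>
    by_cases hm : m ≤ T
    · exact hag m hm
    · push_neg at hm
      have hip : i + p ≤ m := by omega
      have e1 : z m = z (m - p) := by
        have := hz (m - (i + p))
        rw [show m - (i + p) + (i + p) = m by omega,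
            show m - (i + p) + i = m - p by omega] at this
        exact this.symm
      have e2 : z' m = z' (m - p) := by
        have := hz' (m - (i + p))
        rw [show m - (i + p) + (i + p) = m by omega,
            show m - (i + p) + i = m - p by omega] at this
        exact this.symm
      rw [e1, e2]
      exact ih (m - p) (by omega)

lemma iter_apply (m : ℕ) (x : ShiftSpace n A) (k : ℕ) :
    ((shiftMap n A)^[m] x).1 k = x.1 (k + m) := by
  induction m generalizing k with
  | zero => rfl
  | succ m ih =>
    rw [Function.iterate_succ_apply']
    show ((shiftMap n A)^[m] x).1 (k + 1) = x.1 (k + (m + 1))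
    rw [ih, show k + 1 + m = k + (m + 1) from by omega]

lemma key (htrans : GraphTransitive n A) (hnc : NotACycle n A)
    (i p : ℕ) (hp : 0 < p) :
    interior (closure {x : ShiftSpace n A |
      (shiftMap n A)^[i] x = (shiftMap n A)^[i + p] x}) = ∅ := by
  obtain ⟨a, b, c, hbc, hab, hac⟩ := hnc
  -- the set is closed
  have hVeq : {x : ShiftSpace n A | (shiftMap n A)^[i] x = (shiftMap n A)^[i + p] x}
      = {x : ShiftSpace n A | ∀ k, x.1 (k + i) = x.1 (k + (i + p))} := by
    ext x
    simp only [Set.mem_setOf_eq, Subtype.ext_iff, funext_iff]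
    constructor
    · intro h k; have := h k; rwa [iter_apply, iter_apply] at this
    · intro h k; rw [iter_apply, iter_apply]; exact h k
  have hVclosed : IsClosed {x : ShiftSpace n A | ∀ k, x.1 (k + i) = x.1 (k + (i + p))} := by
    have : {x : ShiftSpace n A | ∀ k, x.1 (k + i) = x.1 (k + (i + p))}
        = ⋂ k, {x : ShiftSpace n A | x.1 (k + i) = x.1 (k + (i + p))} := by
      ext x; simp [Set.mem_iInter]
    rw [this]
    refine isClosed_iInter fun k => isClosed_eq ?_ ?_
    · exact (continuous_apply (k + i)).comp continuous_subtype_val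
    · exact (continuous_apply (k + (i + p))).comp continuous_subtype_val
  rw [hVeq, hVclosed.closure_eq]
  rw [Set.eq_empty_iff_forall_notMem]
  intro x hx
  rw [mem_interior_iff_mem_nhds, nhds_subtype, Filter.mem_comap] at hx
  obtain ⟨W, hW, hWsub⟩ := hx
  obtain ⟨N, hN⟩ := cylinder_sub hW
  -- paths
  obtain ⟨ℓ0, f0, hf00, hf0l, hf0e⟩ := path_fun htrans (x.1 N) a
  obtain ⟨ℓ1, f1, hf10, hf1l, hf1e⟩ := path_fun htrans b a
  obtain ⟨ℓ2, f2, hf20, hf2l, hf2e⟩ := path_fun htrans c a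
  -- cycles at a through b resp. c
  set L1 := ℓ1 + 1 with hL1def
  set L2 := ℓ2 + 1 with hL2def
  set h1 : ℕ → Fin n := fun k => if k = 0 then a else f1 (k - 1) with hh1def
  set h2 : ℕ → Fin n := fun k => if k = 0 then a else f2 (k - 1) with hh2def
  have hh10 : h1 0 = a := by simp [hh1def]
  have hh20 : h2 0 = a := by simp [hh2def]
  have hh1L : h1 L1 = h1 0 := by
    simp only [hh1def, if_neg (by omega : ¬ L1 = 0), if_pos rfl]
    rw [show L1 - 1 = ℓ1 by omega, hf1l]
  have hh2L : h2 L2 = h2 0 := by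
    simp only [hh2def, if_neg (by omega : ¬ L2 = 0), if_pos rfl]
    rw [show L2 - 1 = ℓ2 by omega, hf2l]
  have hh1e : ∀ k < L1, A (h1 k) (h1 (k + 1)) = 1 := by
    intro k hk
    rcases Nat.eq_zero_or_pos k with rfl | hk0
    · simp only [hh1def, if_pos rfl, if_neg (by omega : ¬ (0:ℕ) + 1 = 0)]
      simpa [hf10] using hab
    · simp only [hh1def, if_neg (by omega : ¬ k = 0), if_neg (by omega : ¬ k + 1 = 0)]
      rw [show k + 1 - 1 = (k - 1) + 1 by omega]
      exact hf1e (k - 1) (by omega)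
  have hh2e : ∀ k < L2, A (h2 k) (h2 (k + 1)) = 1 := by
    intro k hk
    rcases Nat.eq_zero_or_pos k with rfl | hk0
    · simp only [hh2def, if_pos rfl, if_neg (by omega : ¬ (0:ℕ) + 1 = 0)]
      simpa [hf20] using hac
    · simp only [hh2def, if_neg (by omega : ¬ k = 0), if_neg (by omega : ¬ k + 1 = 0)]
      rw [show k + 1 - 1 = (k - 1) + 1 by omega]
      exact hf2e (k - 1) (by omega)
  have hL1pos : 0 < L1 := by omega
  have hL2pos : 0 < L2 := by omega
  -- special values
  have hh1one : h1 (1 % L1) = b := by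
    rcases Nat.lt_or_ge 1 L1 with h | h
    · rw [Nat.mod_eq_of_lt h]
      simp only [hh1def, if_neg one_ne_zero]
      simpa using hf10
    · have hL11 : L1 = 1 := by omega
      have : (1 : ℕ) % L1 = 0 := by rw [hL11]
      rw [this, hh10]
      have : ℓ1 = 0 := by omega
      rw [this] at hf1l
      rw [← hf1l, hf10]
  -- tails
  set tail1 : ℕ → Fin n := fun s => h1 (s % L1) with htail1def
  have htail1e : ∀ s, A (tail1 s) (tail1 (s + 1)) = 1 := cyc_edges hL1pos hh1L hh1e
  set tail2 : ℕ → Fin n := fun s => if s < L2 then h2 s else tail1 (s - L2) with htail2def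
  have htail2e : ∀ s, A (tail2 s) (tail2 (s + 1)) = 1 := by
    refine glue_edges (fun s hs => hh2e s (by omega)) ?_ htail1e
    show h2 L2 = tail1 0
    rw [hh2L, hh20, htail1def]
    simp [hh10]
  have htail20 : tail2 0 = a := by
    simp only [htail2def, if_pos hL2pos, hh20]
  have htail21 : tail2 1 = c := by
    rcases Nat.lt_or_ge 1 L2 with h | h
    · simp only [htail2def, if_pos h, hh2def, if_neg one_ne_zero]
      simpa using hf20
    · have hL21 : L2 = 1 := by omega
      simp only [htail2def, if_neg (by omega : ¬ 1 < L2)]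
      rw [show 1 - L2 = 0 by omega]
      have : tail1 0 = a := by simp [htail1def, hh10]
      rw [this]
      have hℓ2 : ℓ2 = 0 := by omega
      rw [hℓ2] at hf2l
      rw [← hf20, hf2l]
  -- the prefix piece
  set t := N + ℓ0 with htdef
  set z : ℕ → Fin n := fun s => if s < N then x.1 s else f0 (s - N) with hzdef
  have hze : ∀ s, s + 1 ≤ t → A (z s) (z (s + 1)) = 1 := by
    intro s hs
    by_cases h1' : s + 1 < N
    · simp only [hzdef, if_pos (by omega : s < N), if_pos h1']
      exact x.2 s
    · by_cases h2' : s < N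
      · -- s + 1 = N
        have hsN : s + 1 = N := by omega
        simp only [hzdef, if_pos h2', if_neg (by omega : ¬ s + 1 < N)]
        rw [show s + 1 - N = 0 by omega, hf00, ← hsN]
        exact x.2 s
      · simp only [hzdef, if_neg h2', if_neg (by omega : ¬ s + 1 < N)]
        rw [show s + 1 - N = (s - N) + 1 by omega]
        exact hf0e (s - N) (by omega)
  have hzt : z t = a := by
    rcases Nat.eq_zero_or_pos ℓ0 with h | h
    · simp only [hzdef, htdef, h, Nat.add_zero]
      by_cases hN : N = 0
      · subst hN; simp only [if_neg (lt_irrefl 0)]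
        rw [← hf0l, h]
      · simp only [if_neg (lt_irrefl N)]
        rw [Nat.sub_self, ← hf0l, h]
    · simp only [hzdef, htdef, if_neg (by omega : ¬ N + ℓ0 < N)]
      rw [show N + ℓ0 - N = ℓ0 by omega, hf0l]
  -- first sequence: prefix then cycle forever
  set y1 : ℕ → Fin n := fun s => if s < t then z s else tail1 (s - t) with hy1def
  have hy1e : ∀ s, A (y1 s) (y1 (s + 1)) = 1 := by
    refine glue_edges hze ?_ htail1e
    rw [hzt]; simp [htail1def, hh10]
  -- switch point
  set r := i + p with hrdef
  set t2 := t + r * L1 with ht2def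
  have hy1t2 : y1 t2 = a := by
    simp only [hy1def, ht2def, if_neg (by omega : ¬ t + r * L1 < t)]
    rw [show t + r * L1 - t = r * L1 by omega]
    simp [htail1def, Nat.mul_mod_left, hh10]
  set y2 : ℕ → Fin n := fun s => if s < t2 then y1 s else tail2 (s - t2) with hy2def
  have hy2e : ∀ s, A (y2 s) (y2 (s + 1)) = 1 := by
    refine glue_edges (fun s _ => hy1e s) ?_ htail2e
    rw [hy1t2, htail20]
  -- agreement
  have hagree : ∀ m ≤ t2, y1 m = y2 m := by
    intro m hm
    rcases Nat.lt_or_ge m t2 with h | h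
    · simp [hy2def, if_pos h]
    · have hmt : m = t2 := by omega
      subst hmt
      simp only [hy2def, if_neg (lt_irrefl t2)]
      rw [Nat.sub_self, htail20, hy1t2]
  -- both are in the cylinder
  have hy1cyl : ∀ k < N, y1 k = x.1 k := by
    intro k hk
    simp only [hy1def, if_pos (by omega : k < t), hzdef, if_pos hk]
  have hy2cyl : ∀ k < N, y2 k = x.1 k := by
    intro k hk
    rw [← hagree k (by omega)]
    exact hy1cyl k hk
  -- memberships
  have hy1mem : y1 ∈ ShiftSpace n A := hy1e
  have hy2mem : y2 ∈ ShiftSpace n A := hy2e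
  have hy1V : ∀ k, y1 (k + i) = y1 (k + (i + p)) := by
    exact hWsub (a := ⟨y1, hy1mem⟩) (hN y1 hy1cyl)
  have hy2V : ∀ k, y2 (k + i) = y2 (k + (i + p)) := by
    exact hWsub (a := ⟨y2, hy2mem⟩) (hN y2 hy2cyl)
  -- contradiction
  have hT : i + p ≤ t2 := by
    have : r ≤ r * L1 := Nat.le_mul_of_pos_right r hL1pos
    omega
  have hall : ∀ m, y1 m = y2 m := per_unique hp hy1V hy2V hT hagree
  have he1 : y1 (t2 + 1) = b := by
    simp only [hy1def, if_neg (by omega : ¬ t2 + 1 < t)]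
    rw [show t2 + 1 - t = 1 + r * L1 by omega]
    simp only [htail1def]
    rw [Nat.add_mul_mod_self_right]
    exact hh1one
  have he2 : y2 (t2 + 1) = c := by
    simp only [hy2def, if_neg (by omega : ¬ t2 + 1 < t2)]
    rw [show t2 + 1 - t2 = 1 by omega]
    exact htail21
  exact hbc (he1 ▸ he2 ▸ hall (t2 + 1))

end Aux

/-- if `Gr(A)` is transitive and not a cycle, then `(X_A, σ_A)` is
topologically free: for `i ≠ j` the closure of `{x : σ_A^i x = σ_A^j x}` has empty
interior. -/
theorem one_sided_topologically_free (n : ℕ) (A : Fin n → Fin n → ℕ)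
    (hA : ∀ i j, A i j = 0 ∨ A i j = 1) (htrans : GraphTransitive n A)
    (hnc : NotACycle n A) :
    ∀ i j : ℕ, i ≠ j →
      interior (closure {x : ShiftSpace n A |
        (shiftMap n A)^[i] x = (shiftMap n A)^[j] x}) = ∅ := by
  intro i j hij
  rcases lt_or_gt_of_ne hij with h | h
  · have := key htrans hnc i (j - i) (by omega)
    rwa [show i + (j - i) = j by omega] at this
  · have h2 := key htrans hnc j (i - j) (by omega)
    rw [show j + (i - j) = i by omega] at h2
    have hset : {x : ShiftSpace n A | (shiftMap n A)^[i] x = (shiftMap n A)^[j] x}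
        = {x : ShiftSpace n A | (shiftMap n A)^[j] x = (shiftMap n A)^[i] x} :=
      Set.ext fun x => ⟨Eq.symm, Eq.symm⟩
    rw [hset]
    exact h2
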